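/- Every element of the field Q(√(Q^+)) ⊆ R generated over Q by the square roots of all positive rationals has a unique representation of the form r_1√n_1 + ... + r_k√n_k where r_i are nonzero rationals and n_1 < n_2 < ... < n_k are squarefree positive integers. -/

import Mathlib

open Real IntermediateField

noncomputable def Fld (S : Finset ℕ) : IntermediateField ℚ ℝ :=
  IntermediateField.adjoin ℚ ((fun p : ℕ => Real.sqrt p) '' (S : Set ℕ))

lemma sqrt_mem_Fld {S : Finset ℕ} {p : ℕ} (hp : p ∈ S) : Real.sqrt p ∈ Fld S :=
  IntermediateField.subset_adjoin _ _ ⟨p, by simpa using hp, rfl⟩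

lemma Fld_mono {S T : Finset ℕ} (h : S ⊆ T) : Fld S ≤ Fld T :=
  IntermediateField.adjoin.mono _ _ _ (Set.image_mono (by exact_mod_cast h))

lemma sqrt_mem_of_primes {S : Finset ℕ} :
    ∀ n : ℕ, n ≠ 0 → (∀ p : ℕ, p.Prime → p ∣ n → p ∈ S) → Real.sqrt n ∈ Fld S := by
  intro n
  induction n using Nat.strong_induction_on with
  | _ n ih =>
    intro hn hprimes
    rcases eq_or_ne n 1 with rfl | hn1
    · simpa using (Fld S).one_mem
    · obtain ⟨p, hp, hpd⟩ := Nat.exists_prime_and_dvd hn1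
      obtain ⟨m, rfl⟩ := hpd
      have hm : m ≠ 0 := by rintro rfl; simp at hn
      have hmlt : m < p * m := by
        have := hp.two_le
        calc m = 1 * m := (one_mul m).symm
        _ < p * m := Nat.mul_lt_mul_of_lt_of_le (by omega) le_rfl (Nat.pos_of_ne_zero hm)
      have h1 : Real.sqrt (p * m : ℕ) = Real.sqrt p * Real.sqrt m := by
        push_cast
        exact Real.sqrt_mul (by positivity) _
      rw [h1]
      exact (Fld S).mul_mem (sqrt_mem_Fld (hprimes p hp ⟨m, rfl⟩))
        (ih m hmlt hm fun q hq hqd => hprimes q hq (hqd.mul_left p))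

lemma key_zero {S : Finset ℕ} {q : ℕ} (hq : Real.sqrt q ∉ Fld S)
    {a b : ℝ} (ha : a ∈ Fld S) (hb : b ∈ Fld S) (h : a + b * Real.sqrt q = 0) :
    a = 0 ∧ b = 0 := by
  by_cases hb0 : b = 0
  · constructor
    · simpa [hb0] using h
    · exact hb0
  · exfalso
    apply hq
    have : Real.sqrt q = -a / b := by
      field_simp
      linarith
    rw [this]
    exact (Fld S).div_mem ((Fld S).neg_mem ha) hb

lemma mem_decomp {S : Finset ℕ} {q : ℕ} (hq : Real.sqrt q ∉ Fld S)
    {x : ℝ} (hx : x ∈ Fld (insert q S)) :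
    ∃ a b : ℝ, a ∈ Fld S ∧ b ∈ Fld S ∧ x = a + b * Real.sqrt q := by
  set s : ℝ := Real.sqrt q with hs
  have hs2 : s * s = (q : ℝ) := Real.mul_self_sqrt (by positivity)
  -- the candidate subfield
  let K : Subfield ℝ :=
    { carrier := {x : ℝ | ∃ a b : ℝ, a ∈ Fld S ∧ b ∈ Fld S ∧ x = a + b * s}
      zero_mem' := ⟨0, 0, (Fld S).zero_mem, (Fld S).zero_mem, by ring⟩
      one_mem' := ⟨1, 0, (Fld S).one_mem, (Fld S).zero_mem, by ring⟩
      add_mem' := by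
        rintro x y ⟨a, b, ha, hb, rfl⟩ ⟨c, d, hc, hd, rfl⟩
        exact ⟨a + c, b + d, (Fld S).add_mem ha hc, (Fld S).add_mem hb hd, by ring⟩
      neg_mem' := by
        rintro x ⟨a, b, ha, hb, rfl⟩
        exact ⟨-a, -b, (Fld S).neg_mem ha, (Fld S).neg_mem hb, by ring⟩
      mul_mem' := by
        rintro x y ⟨a, b, ha, hb, rfl⟩ ⟨c, d, hc, hd, rfl⟩
        refine ⟨a * c + b * d * q, a * d + b * c, ?_, ?_, ?_⟩
        · exact (Fld S).add_mem ((Fld S).mul_mem ha hc)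
            ((Fld S).mul_mem ((Fld S).mul_mem hb hd) ((Fld S).natCast_mem q))
        · exact (Fld S).add_mem ((Fld S).mul_mem ha hd) ((Fld S).mul_mem hb hc)
        · have : (a + b * s) * (c + d * s) = a * c + b * d * (s * s) + (a * d + b * c) * s := by
            ring
          rw [this, hs2]
      inv_mem' := by
        rintro x ⟨a, b, ha, hb, rfl⟩
        by_cases hx0 : a + b * s = 0
        · rw [hx0]
          exact ⟨0, 0, (Fld S).zero_mem, (Fld S).zero_mem, by simp⟩
        · by_cases hb0 : b = 0
          · exact ⟨a⁻¹, 0, (Fld S).inv_mem ha, (Fld S).zero_mem, by simp [hb0]⟩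
          · have hD : a * a - (q : ℝ) * (b * b) ≠ 0 := by
              intro hD0
              apply hq
              have hq2 : (a / b) * (a / b) = (q : ℝ) := by
                field_simp
                nlinarith [hD0]
              have : s = a / b ∨ s = -(a / b) := by
                have h1 : (s - a / b) * (s + a / b) = 0 := by nlinarith [hs2, hq2]
                rcases mul_eq_zero.mp h1 with h | h
                · left; linarith
                · right; linarith
              rcases this with h | h
              · rw [h]; exact (Fld S).div_mem ha hb
              · rw [h]; exact (Fld S).neg_mem ((Fld S).div_mem ha hb)
            refine ⟨a / (a * a - q * (b * b)), -b / (a * a - q * (b * b)), ?_, ?_, ?_⟩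
            · exact (Fld S).div_mem ha ((Fld S).sub_mem ((Fld S).mul_mem ha ha)
                ((Fld S).mul_mem ((Fld S).natCast_mem q) ((Fld S).mul_mem hb hb)))
            · exact (Fld S).div_mem ((Fld S).neg_mem hb) ((Fld S).sub_mem ((Fld S).mul_mem ha ha)
                ((Fld S).mul_mem ((Fld S).natCast_mem q) ((Fld S).mul_mem hb hb)))
            · apply inv_eq_of_mul_eq_one_right
              field_simp
              rw [div_eq_one_iff_eq (by intro h; apply hD; linear_combination h)]
              linear_combination (-b * b) * hs2 }
  have hK : ∀ y ∈ Fld (insert q S), y ∈ K := by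
    intro y hy
    have hle : Fld (insert q S) ≤ Subfield.toIntermediateField K
        (fun r : ℚ => show ((r : ℝ) : ℝ) ∈ K from
          ⟨(r : ℝ), 0, SubfieldClass.ratCast_mem (Fld S) r, (Fld S).zero_mem, by
          ring⟩) := by
      rw [show Fld (insert q S) = IntermediateField.adjoin ℚ
        ((fun p : ℕ => Real.sqrt p) '' ((insert q S : Finset ℕ) : Set ℕ)) from rfl,
        IntermediateField.adjoin_le_iff]
      rintro _ ⟨p, hp, rfl⟩
      simp only [Finset.coe_insert, Set.mem_insert_iff] at hp
      rcases hp with rfl | hp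
      · exact ⟨0, 1, (Fld S).zero_mem, (Fld S).one_mem, by ring⟩
      · exact ⟨Real.sqrt p, 0, sqrt_mem_Fld hp, (Fld S).zero_mem, by ring⟩
    exact hle hy
  exact hK x hx

lemma sqrt_nat_pos {q : ℕ} (hq : 0 < q) : 0 < Real.sqrt q := Real.sqrt_pos.mpr (by positivity)

lemma primes_mem_of_sqrt_mem :
    ∀ (S : Finset ℕ), (∀ p ∈ S, p.Prime) →
    ∀ n : ℕ, Squarefree n → Real.sqrt n ∈ Fld S →
    ∀ p : ℕ, p.Prime → p ∣ n → p ∈ S := by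
  intro S
  induction S using Finset.induction_on with
  | empty =>
    intro _ n hn hmem p hp hpn
    exfalso
    have hbot : Fld (∅ : Finset ℕ) = ⊥ := by
      rw [show Fld (∅ : Finset ℕ) = IntermediateField.adjoin ℚ
        ((fun p : ℕ => Real.sqrt p) '' ((∅ : Finset ℕ) : Set ℕ)) from rfl]
      simp [IntermediateField.adjoin_empty]
    rw [hbot, IntermediateField.mem_bot] at hmem
    obtain ⟨r, hr⟩ := hmem
    have : ¬ Irrational (Real.sqrt n) := by
      rw [Irrational]
      push_neg
      exact ⟨r, by exact_mod_cast hr⟩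
    apply this
    rw [irrational_sqrt_natCast_iff]
    rintro ⟨k, hk⟩
    have : p * p ∣ n := by
      have hpk : p ∣ k := by
        have : p ∣ k * k := hk ▸ hpn
        exact hp.dvd_of_dvd_pow (n := 2) (by rwa [sq])
      obtain ⟨j, rfl⟩ := hpk
      exact ⟨j * j, by rw [hk]; ring⟩
    exact hp.not_isUnit (hn p this)
  | @insert q S hq IH =>
    intro hprimes n hn hmem p hp hpn
    have hqp : q.Prime := hprimes q (Finset.mem_insert_self q S)
    have hSp : ∀ r ∈ S, r.Prime := fun r hr => hprimes r (Finset.mem_insert_of_mem hr)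
    have hsq : Real.sqrt q ∉ Fld S := by
      intro h
      exact hq (IH hSp q hqp.squarefree h q hqp dvd_rfl)
    obtain ⟨a, b, ha, hb, hab⟩ := mem_decomp hsq hmem
    have hn0 : n ≠ 0 := hn.ne_zero
    have hsq2 : Real.sqrt q * Real.sqrt q = (q : ℝ) := Real.mul_self_sqrt (by positivity)
    have hsqn : Real.sqrt n * Real.sqrt n = (n : ℝ) := Real.mul_self_sqrt (by positivity)
    -- n = a^2 + b^2 q + 2ab sqrt q
    have hkey : (a * a + b * b * q - n) + (2 * a * b) * Real.sqrt q = 0 := by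
      have : (a + b * Real.sqrt q) * (a + b * Real.sqrt q) = (n : ℝ) := by
        rw [← hab]; exact hsqn
      nlinarith [hsq2, this]
    have hmemA : a * a + b * b * (q : ℝ) - n ∈ Fld S := by
      refine (Fld S).sub_mem ((Fld S).add_mem ((Fld S).mul_mem ha ha)
        ((Fld S).mul_mem ((Fld S).mul_mem hb hb) ((Fld S).natCast_mem q)))
        ((Fld S).natCast_mem n)
    have hmemB : 2 * a * b ∈ Fld S :=
      (Fld S).mul_mem ((Fld S).mul_mem ((Fld S).natCast_mem 2) ha) hb
    obtain ⟨h1, h2⟩ := key_zero hsq (by exact_mod_cast hmemA) hmemB hkey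
    have hab0 : a = 0 ∨ b = 0 := by
      rcases mul_eq_zero.mp h2 with h | h
      · rcases mul_eq_zero.mp h with h' | h'
        · norm_num at h'
        · exact Or.inl h'
      · exact Or.inr h
    rcases hab0 with ha0 | hb0
    · -- sqrt n = b * sqrt q
      subst ha0
      rw [zero_add] at hab
      by_cases hqn : q ∣ n
      · -- p = q or p divides n / q
        obtain ⟨m, rfl⟩ := hqn
        rcases eq_or_ne p q with rfl | hpq
        · exact Finset.mem_insert_self p S
        · apply Finset.mem_insert_of_mem
          have hm0 : m ≠ 0 := by rintro rfl; simp at hn0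
          have hsqrtm : Real.sqrt m ∈ Fld S := by
            have hsplit : Real.sqrt ((q * m : ℕ) : ℝ) = Real.sqrt q * Real.sqrt m := by
              push_cast; exact Real.sqrt_mul (by positivity) _
            have hb_eq : b = Real.sqrt m := by
              have hqpos : (0 : ℝ) < Real.sqrt q := sqrt_nat_pos hqp.pos
              have h3 := hab
              rw [hsplit] at h3
              have h4 : b * Real.sqrt q = Real.sqrt m * Real.sqrt q := by
                rw [← h3]; ring
              exact mul_right_cancel₀ (ne_of_gt hqpos) h4
            rw [← hb_eq]; exact hb
          have hmsf : Squarefree m := hn.squarefree_of_dvd ⟨q, by ring⟩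
          have hpm : p ∣ m := by
            rcases (hp.dvd_mul).mp hpn with h | h
            · exact absurd (((Nat.prime_dvd_prime_iff_eq hp hqp)).mp h) hpq
            · exact h
          exact IH hSp m hmsf hsqrtm p hp hpm
      · -- q does not divide n : contradiction
        exfalso
        have hcop : Nat.Coprime q n := (Nat.Prime.coprime_iff_not_dvd hqp).mpr hqn
        have hsfnq : Squarefree (q * n) := (Nat.squarefree_mul hcop).mpr ⟨hqp.squarefree, hn⟩
        have hsqrtnq : Real.sqrt (q * n : ℕ) ∈ Fld S := by
          have hsplit : Real.sqrt ((q * n : ℕ) : ℝ) = Real.sqrt q * Real.sqrt n := by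
            push_cast; exact Real.sqrt_mul (by positivity) _
          rw [hsplit, hab]
          have : Real.sqrt q * (b * Real.sqrt q) = b * q := by
            linear_combination b * hsq2
          rw [this]
          exact (Fld S).mul_mem hb ((Fld S).natCast_mem q)
        exact hq (IH hSp (q * n) hsfnq hsqrtnq q hqp ⟨n, rfl⟩)
    · -- sqrt n = a ∈ Fld S
      subst hb0
      rw [zero_mul, add_zero] at hab
      exact Finset.mem_insert_of_mem (IH hSp n hn (hab ▸ ha) p hp hpn)

lemma coeffs_zero :
    ∀ (S : Finset ℕ), (∀ p ∈ S, p.Prime) → ∀ c : ℕ →₀ ℚ,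
    (∀ n ∈ c.support, Squarefree n ∧ ∀ p : ℕ, p.Prime → p ∣ n → p ∈ S) →
    (∑ n ∈ c.support, (c n : ℝ) * Real.sqrt n) = 0 → c = 0 := by
  intro S
  induction S using Finset.induction_on with
  | empty =>
    intro _ c hc hsum
    have hsub : c.support ⊆ {1} := by
      intro n hn
      obtain ⟨hsf, hpr⟩ := hc n hn
      rw [Finset.mem_singleton]
      by_contra h1
      obtain ⟨p, hp, hpd⟩ := Nat.exists_prime_and_dvd h1
      exact absurd (hpr p hp hpd) (Finset.notMem_empty p)
    rcases Finset.subset_singleton_iff.mp hsub with h | h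
    · exact Finsupp.support_eq_empty.mp h
    · exfalso
      rw [h] at hsum
      simp at hsum
      have : (1 : ℕ) ∈ c.support := by rw [h]; exact Finset.mem_singleton_self 1
      rw [Finsupp.mem_support_iff] at this
      exact this hsum
  | @insert q S hq IH =>
    intro hprimes c hc hsum
    have hqp : q.Prime := hprimes q (Finset.mem_insert_self q S)
    have hSp : ∀ r ∈ S, r.Prime := fun r hr => hprimes r (Finset.mem_insert_of_mem hr)
    have hsq : Real.sqrt q ∉ Fld S := by
      intro h
      exact hq (primes_mem_of_sqrt_mem S hSp q hqp.squarefree h q hqp dvd_rfl)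
    classical
    set P := c.support.filter (fun n => q ∣ n) with hP
    set Pc := c.support.filter (fun n => ¬ q ∣ n) with hPc
    set A : ℝ := ∑ n ∈ Pc, (c n : ℝ) * Real.sqrt n with hA
    set B : ℝ := ∑ n ∈ P, (c n : ℝ) * Real.sqrt (n / q : ℕ) with hB
    have hq0 : (0:ℝ) < Real.sqrt q := sqrt_nat_pos hqp.pos
    -- rewrite the sum
    have hsplit : A + B * Real.sqrt q = 0 := by
      rw [← hsum, hA, hB, Finset.sum_mul]
      rw [← Finset.sum_filter_add_sum_filter_not c.support (fun n => q ∣ n)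
        (fun n => (c n : ℝ) * Real.sqrt n), ← hP, ← hPc, add_comm]
      congr 1
      apply Finset.sum_congr rfl
      intro n hn
      have hqn : q ∣ n := by
        rw [hP] at hn; exact (Finset.mem_filter.mp hn).2
      have hnq : n = q * (n / q) := (Nat.mul_div_cancel' hqn).symm
      have hds : Real.sqrt n = Real.sqrt (n / q : ℕ) * Real.sqrt q := by
        conv_lhs => rw [hnq]
        push_cast
        rw [Real.sqrt_mul (by positivity), mul_comm]
      rw [hds]; ring
    have hmemA : A ∈ Fld S := by
      rw [hA]
      apply sum_mem
      intro n hn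
      rw [hPc, Finset.mem_filter] at hn
      obtain ⟨hns, hqn⟩ := hn
      obtain ⟨hsf, hpr⟩ := hc n hns
      refine (Fld S).mul_mem (SubfieldClass.ratCast_mem _ _) (sqrt_mem_of_primes n hsf.ne_zero ?_)
      intro p hp hpd
      rcases Finset.mem_insert.mp (hpr p hp hpd) with rfl | h
      · exact absurd hpd hqn
      · exact h
    have hmemB : B ∈ Fld S := by
      rw [hB]
      apply sum_mem
      intro n hn
      rw [hP, Finset.mem_filter] at hn
      obtain ⟨hns, hqn⟩ := hn
      obtain ⟨hsf, hpr⟩ := hc n hns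
      have hm0 : n / q ≠ 0 := by
        intro h
        have := Nat.mul_div_cancel' hqn
        rw [h, mul_zero] at this
        exact hsf.ne_zero this.symm
      refine (Fld S).mul_mem (SubfieldClass.ratCast_mem _ _) (sqrt_mem_of_primes _ hm0 ?_)
      intro p hp hpd
      have hpn : p ∣ n := hpd.trans (Nat.div_dvd_of_dvd hqn)
      rcases Finset.mem_insert.mp (hpr p hp hpn) with rfl | h
      · exfalso
        have : p * p ∣ n := by
          obtain ⟨k, hk⟩ := hpd
          exact ⟨k, by rw [← Nat.mul_div_cancel' hqn, hk]; ring⟩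
        exact hp.not_isUnit (hsf p this)
      · exact h
    obtain ⟨hA0, hB0⟩ := key_zero hsq hmemA hmemB hsplit
    -- from B = 0 deduce that c vanishes on multiples of q
    have hinj : Set.InjOn (fun m => q * m) ((fun m => q * m) ⁻¹' ↑c.support) := by
      intro a _ b _ h
      exact Nat.eq_of_mul_eq_mul_left hqp.pos h
    set d : ℕ →₀ ℚ := Finsupp.comapDomain (fun m => q * m) c hinj with hd
    have hdsum : ∑ m ∈ d.support, (d m : ℝ) * Real.sqrt m = B := by
      rw [hB]
      apply Finset.sum_nbij' (i := fun m => q * m) (j := fun n => n / q)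
      · intro m hm
        rw [hd] at hm
        simp only [Finsupp.comapDomain_support, Finset.mem_preimage] at hm
        rw [hP, Finset.mem_filter]
        exact ⟨hm, ⟨m, rfl⟩⟩
      · intro n hn
        rw [hP, Finset.mem_filter] at hn
        rw [hd]
        simp only [Finsupp.comapDomain_support, Finset.mem_preimage]
        rw [Nat.mul_div_cancel' hn.2]
        exact hn.1
      · intro m hm
        exact Nat.mul_div_cancel_left m hqp.pos
      · intro n hn
        rw [hP, Finset.mem_filter] at hn
        exact Nat.mul_div_cancel' hn.2
      · intro m hm
        rw [hd]
        simp only [Finsupp.comapDomain_apply]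
        rw [Nat.mul_div_cancel_left m hqp.pos]
    have hd0 : d = 0 := by
      apply IH hSp
      · intro m hm
        rw [hd] at hm
        simp only [Finsupp.comapDomain_support, Finset.mem_preimage] at hm
        obtain ⟨hsf, hpr⟩ := hc (q * m) hm
        constructor
        · exact hsf.squarefree_of_dvd ⟨q, mul_comm q m⟩
        · intro p hp hpd
          rcases Finset.mem_insert.mp (hpr p hp (hpd.mul_left q)) with rfl | h
          · exfalso
            obtain ⟨k, hk⟩ := hpd
            exact hp.not_isUnit (hsf p ⟨k, by rw [hk]; ring⟩)
          · exact h
      · rw [hdsum]; exact hB0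
    have hPempty : P = ∅ := by
      rw [hP, Finset.filter_eq_empty_iff]
      intro n hn hqn
      have hcn : c n = 0 := by
        have : d (n / q) = 0 := by rw [hd0]; rfl
        rw [hd] at this
        simp only [Finsupp.comapDomain_apply] at this
        rwa [Nat.mul_div_cancel' hqn] at this
      exact (Finsupp.mem_support_iff.mp hn) hcn
    have hsupp : c.support = Pc := by
      rw [hPc, eq_comm, Finset.filter_eq_self]
      intro n hn hqn
      have : n ∈ P := by rw [hP, Finset.mem_filter]; exact ⟨hn, hqn⟩
      rw [hPempty] at this
      exact absurd this (Finset.notMem_empty n)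
    apply IH hSp
    · intro n hn
      obtain ⟨hsf, hpr⟩ := hc n hn
      refine ⟨hsf, fun p hp hpd => ?_⟩
      rcases Finset.mem_insert.mp (hpr p hp hpd) with rfl | h
      · exfalso
        have : n ∈ P := by rw [hP, Finset.mem_filter]; exact ⟨hn, hpd⟩
        rw [hPempty] at this
        exact absurd this (Finset.notMem_empty n)
      · exact h
    · rw [hsupp, ← hA]; exact hA0

noncomputable def SqSet (S : Finset ℕ) : Set ℝ :=
  (fun n : ℕ => Real.sqrt n) '' {n : ℕ | Squarefree n ∧ ∀ p : ℕ, p.Prime → p ∣ n → p ∈ S}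

lemma mem_span_of_mem_Fld :
    ∀ (S : Finset ℕ), (∀ p ∈ S, p.Prime) → ∀ x : ℝ, x ∈ Fld S →
    x ∈ Submodule.span ℚ (SqSet S) := by
  intro S
  induction S using Finset.induction_on with
  | empty =>
    intro _ x hx
    have hbot : Fld (∅ : Finset ℕ) = ⊥ := by
      rw [show Fld (∅ : Finset ℕ) = IntermediateField.adjoin ℚ
        ((fun p : ℕ => Real.sqrt p) '' ((∅ : Finset ℕ) : Set ℕ)) from rfl]
      simp [IntermediateField.adjoin_empty]
    rw [hbot, IntermediateField.mem_bot] at hx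
    obtain ⟨r, rfl⟩ := hx
    have h1 : (1 : ℝ) ∈ SqSet (∅ : Finset ℕ) := by
      refine ⟨1, ⟨squarefree_one, fun p hp hpd => absurd (Nat.dvd_one.mp hpd) hp.ne_one⟩, by simp⟩
    have : (algebraMap ℚ ℝ r : ℝ) = r • (1 : ℝ) := by
      simp [Algebra.smul_def]
    rw [this]
    exact Submodule.smul_mem _ r (Submodule.subset_span h1)
  | @insert q S hq IH =>
    intro hprimes x hx
    have hqp : q.Prime := hprimes q (Finset.mem_insert_self q S)
    have hSp : ∀ r ∈ S, r.Prime := fun r hr => hprimes r (Finset.mem_insert_of_mem hr)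
    have hsq : Real.sqrt q ∉ Fld S := by
      intro h
      exact hq (primes_mem_of_sqrt_mem S hSp q hqp.squarefree h q hqp dvd_rfl)
    obtain ⟨a, b, ha, hb, rfl⟩ := mem_decomp hsq hx
    have hmono : SqSet S ⊆ SqSet (insert q S) := by
      rintro _ ⟨n, ⟨hn, hpr⟩, rfl⟩
      exact ⟨n, ⟨hn, fun p hp hpd => Finset.mem_insert_of_mem (hpr p hp hpd)⟩, rfl⟩
    have hspanmono := Submodule.span_mono (R := ℚ) hmono
    have haS := hspanmono (IH hSp a ha)
    have hmul : ∀ y : ℝ, y ∈ Submodule.span ℚ (SqSet S) →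
        y * Real.sqrt q ∈ Submodule.span ℚ (SqSet (insert q S)) := by
      intro y hy
      induction hy using Submodule.span_induction with
      | mem y hy =>
        obtain ⟨n, ⟨hn, hpr⟩, rfl⟩ := hy
        have hqn : ¬ q ∣ n := fun h => hq (hpr q hqp h)
        have hcop : Nat.Coprime n q := Nat.Coprime.symm ((Nat.Prime.coprime_iff_not_dvd hqp).mpr hqn)
        have hnq : Squarefree (n * q) := (Nat.squarefree_mul hcop).mpr ⟨hn, hqp.squarefree⟩
        have heq : Real.sqrt n * Real.sqrt q = Real.sqrt ((n * q : ℕ) : ℝ) := by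
          push_cast
          rw [Real.sqrt_mul (by positivity)]
        rw [heq]
        apply Submodule.subset_span
        refine ⟨n * q, ⟨hnq, fun p hp hpd => ?_⟩, rfl⟩
        rcases hp.dvd_mul.mp hpd with h | h
        · exact Finset.mem_insert_of_mem (hpr p hp h)
        · rw [(Nat.prime_dvd_prime_iff_eq hp hqp).mp h]
          exact Finset.mem_insert_self q S
      | zero => simp
      | add y z _ _ hy hz =>
        rw [add_mul]
        exact Submodule.add_mem _ hy hz
      | smul r y _ hy =>
        rw [smul_mul_assoc]
        exact Submodule.smul_mem _ r hy
    exact Submodule.add_mem _ haS (hmul b (IH hSp b hb))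

lemma exists_prime_finset (x : ℝ)
    (hx : x ∈ IntermediateField.adjoin ℚ {y : ℝ | ∃ q : ℚ, 0 < q ∧ y = Real.sqrt q}) :
    ∃ S : Finset ℕ, (∀ p ∈ S, p.Prime) ∧ x ∈ Fld S := by
  classical
  set ι := {S : Finset ℕ // ∀ p ∈ S, p.Prime}
  have hne : Nonempty ι := ⟨⟨∅, by simp⟩⟩
  have hdir : Directed (· ≤ ·) (fun S : ι => Fld S.1) := by
    intro S T
    refine ⟨⟨S.1 ∪ T.1, fun p hp => ?_⟩, Fld_mono Finset.subset_union_left,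
      Fld_mono Finset.subset_union_right⟩
    rcases Finset.mem_union.mp hp with h | h
    · exact S.2 p h
    · exact T.2 p h
  have hle : IntermediateField.adjoin ℚ {y : ℝ | ∃ q : ℚ, 0 < q ∧ y = Real.sqrt q} ≤
      ⨆ S : ι, Fld S.1 := by
    rw [IntermediateField.adjoin_le_iff]
    rintro _ ⟨q, hq, rfl⟩
    set N : ℕ := q.num.toNat * q.den with hN
    have hnum : (0:ℤ) < q.num := Rat.num_pos.mpr hq
    have hN0 : N ≠ 0 := by
      have := q.den_pos
      have : q.num.toNat ≠ 0 := by omega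
      positivity
    have hNc : (N : ℝ) = (q : ℝ) * (q.den : ℝ) ^ 2 := by
      have h1 : ((q.num.toNat : ℤ) : ℝ) = (q.num : ℝ) := by
        norm_cast; omega
      push_cast [hN]
      rw [show ((q.num.toNat : ℝ)) = (q.num : ℝ) by exact_mod_cast h1]
      rw [Rat.cast_def]
      have : (q.den : ℝ) ≠ 0 := by positivity
      field_simp
    have hsqrtN : Real.sqrt N = Real.sqrt q * q.den := by
      rw [hNc, Real.sqrt_mul (by positivity), Real.sqrt_sq (by positivity)]
    have hmem : Real.sqrt q ∈ Fld N.primeFactors := by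
      have h1 : Real.sqrt N ∈ Fld N.primeFactors := by
        apply sqrt_mem_of_primes N hN0
        intro p hp hpd
        exact Nat.mem_primeFactors.mpr ⟨hp, hpd, hN0⟩
      have h2 : Real.sqrt (q : ℝ) = ((q.den : ℝ))⁻¹ * Real.sqrt N := by
        rw [hsqrtN]
        have : (q.den : ℝ) ≠ 0 := by positivity
        field_simp
      rw [h2]
      exact (Fld _).mul_mem ((Fld _).inv_mem ((Fld _).natCast_mem q.den)) h1
    have : Fld N.primeFactors ≤ ⨆ S : ι, Fld S.1 :=
      le_iSup (fun S : ι => Fld S.1) ⟨N.primeFactors, fun p hp => Nat.prime_of_mem_primeFactors hp⟩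
    exact this hmem
  have hx2 := hle hx
  rw [← SetLike.mem_coe, IntermediateField.coe_iSup_of_directed hdir, Set.mem_iUnion] at hx2
  obtain ⟨S, hS⟩ := hx2
  exact ⟨S.1, S.2, hS⟩

theorem stmt6 (x : ℝ)
    (hx : x ∈ IntermediateField.adjoin ℚ {y : ℝ | ∃ q : ℚ, 0 < q ∧ y = Real.sqrt q}) :
    ∃! c : ℕ →₀ ℚ, (∀ n ∈ c.support, Squarefree n) ∧
      x = ∑ n ∈ c.support, (c n : ℝ) * Real.sqrt n := by
  classical
  obtain ⟨S, hSp, hxS⟩ := exists_prime_finset x hx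
  have hspan := mem_span_of_mem_Fld S hSp x hxS
  -- existence
  have hrange : SqSet S = Set.range
      (fun m : {n : ℕ // Squarefree n ∧ ∀ p : ℕ, p.Prime → p ∣ n → p ∈ S} =>
        Real.sqrt (m.1 : ℕ)) := by
    ext y
    constructor
    · rintro ⟨n, hn, rfl⟩
      exact ⟨⟨n, hn⟩, rfl⟩
    · rintro ⟨⟨n, hn⟩, rfl⟩
      exact ⟨n, hn, rfl⟩
  rw [hrange] at hspan
  obtain ⟨f, hf⟩ := Finsupp.mem_span_range_iff_exists_finsupp.mp hspan
  set emb : {n : ℕ // Squarefree n ∧ ∀ p : ℕ, p.Prime → p ∣ n → p ∈ S} ↪ ℕ :=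
    ⟨Subtype.val, Subtype.val_injective⟩ with hemb
  set c : ℕ →₀ ℚ := Finsupp.embDomain emb f with hc
  have hcsupp : c.support = f.support.map emb := Finsupp.support_embDomain emb f
  have hcprop : ∀ n ∈ c.support, Squarefree n ∧ ∀ p : ℕ, p.Prime → p ∣ n → p ∈ S := by
    intro n hn
    rw [hcsupp, Finset.mem_map] at hn
    obtain ⟨m, hm, rfl⟩ := hn
    exact m.2
  have hcx : x = ∑ n ∈ c.support, (c n : ℝ) * Real.sqrt n := by
    rw [hcsupp, Finset.sum_map, ← hf, Finsupp.sum]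
    apply Finset.sum_congr rfl
    intro m hm
    have hda : c (emb m) = f m := Finsupp.embDomain_apply_self emb f m
    rw [hda, Rat.smul_def]
    rfl
  -- uniqueness of any two representations
  have huniq : ∀ c₁ c₂ : ℕ →₀ ℚ, (∀ n ∈ c₁.support, Squarefree n) →
      (∀ n ∈ c₂.support, Squarefree n) →
      (∑ n ∈ c₁.support, (c₁ n : ℝ) * Real.sqrt n) =
      (∑ n ∈ c₂.support, (c₂ n : ℝ) * Real.sqrt n) → c₁ = c₂ := by
    intro c₁ c₂ h1 h2 heq
    set e : ℕ →₀ ℚ := c₁ - c₂ with he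
    have hesupp : e.support ⊆ c₁.support ∪ c₂.support := Finsupp.support_sub
    have hesf : ∀ n ∈ e.support, Squarefree n := by
      intro n hn
      rcases Finset.mem_union.mp (hesupp hn) with h | h
      · exact h1 n h
      · exact h2 n h
    set T : Finset ℕ := e.support.biUnion Nat.primeFactors with hT
    have hTp : ∀ p ∈ T, p.Prime := by
      intro p hp
      rw [hT, Finset.mem_biUnion] at hp
      obtain ⟨n, _, hn⟩ := hp
      exact Nat.prime_of_mem_primeFactors hn
    have hesum : ∑ n ∈ e.support, (e n : ℝ) * Real.sqrt n = 0 := by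
      set U := c₁.support ∪ c₂.support with hU
      have hsU : ∑ n ∈ e.support, (e n : ℝ) * Real.sqrt n
          = ∑ n ∈ U, (e n : ℝ) * Real.sqrt n := by
        apply Finset.sum_subset hesupp
        intro n _ hn
        rw [Finsupp.notMem_support_iff.mp hn]
        simp
      have h1U : ∑ n ∈ c₁.support, (c₁ n : ℝ) * Real.sqrt n
          = ∑ n ∈ U, (c₁ n : ℝ) * Real.sqrt n := by
        apply Finset.sum_subset Finset.subset_union_left
        intro n _ hn
        rw [Finsupp.notMem_support_iff.mp hn]
        simp
      have h2U : ∑ n ∈ c₂.support, (c₂ n : ℝ) * Real.sqrt n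
          = ∑ n ∈ U, (c₂ n : ℝ) * Real.sqrt n := by
        apply Finset.sum_subset Finset.subset_union_right
        intro n _ hn
        rw [Finsupp.notMem_support_iff.mp hn]
        simp
      rw [hsU]
      have : ∀ n ∈ U, (e n : ℝ) * Real.sqrt n
          = (c₁ n : ℝ) * Real.sqrt n - (c₂ n : ℝ) * Real.sqrt n := by
        intro n _
        rw [he, Finsupp.sub_apply]
        push_cast
        ring
      rw [Finset.sum_congr rfl this, Finset.sum_sub_distrib, ← h1U, ← h2U, heq, sub_self]
    have he0 : e = 0 := by
      apply coeffs_zero T hTp e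
      · intro n hn
        refine ⟨hesf n hn, fun p hp hpd => ?_⟩
        rw [hT, Finset.mem_biUnion]
        exact ⟨n, hn, Nat.mem_primeFactors.mpr ⟨hp, hpd, (hesf n hn).ne_zero⟩⟩
      · exact hesum
    rw [he] at he0
    exact sub_eq_zero.mp he0
  refine ⟨c, ⟨fun n hn => (hcprop n hn).1, hcx⟩, ?_⟩
  rintro c' ⟨hc'sf, hc'x⟩
  exact huniq c' c hc'sf (fun n hn => (hcprop n hn).1) (by rw [← hc'x, ← hcx])
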